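/- arXiv:2108.10705 — 2 statements merged into one kernel-verified Lean document; each statement's English description precedes it below -/
import Mathlib

section
/- For each fixed integer n > 1, δ(m,n) → 1 as m → ∞; consequently π − arccos(δ(m,n)) → π as m → ∞. -/
open Metric RealInnerProductSpace

/-- `BorsukSet m n` is the set of real numbers `δ ∈ (0, 1]` with the property that for
every continuous odd map `f : S^{n-1} → ℝ^{m+n-1}` there is a finite subset `X` of the
sphere `S^{n-1}` of cardinality at most `m+n` and geodesic diameter at most
`π - arccos δ` such that `0` lies in the convex hull of `f(X)`.  The number `δ(m,n)` of
the paper is the least element of this set. -/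
def BorsukSet (m n : ℕ) : Set ℝ :=
  {δ : ℝ | δ ∈ Set.Ioc (0 : ℝ) 1 ∧
    ∀ f : EuclideanSpace ℝ (Fin n) → EuclideanSpace ℝ (Fin (m + n - 1)),
      ContinuousOn f (sphere 0 1) →
      (∀ v ∈ sphere (0 : EuclideanSpace ℝ (Fin n)) 1, f (-v) = -f v) →
      ∃ X : Finset (EuclideanSpace ℝ (Fin n)),
        ↑X ⊆ sphere (0 : EuclideanSpace ℝ (Fin n)) 1 ∧
        X.card ≤ m + n ∧
        (∀ x ∈ X, ∀ y ∈ X, Real.arccos ⟪x, y⟫ ≤ Real.pi - Real.arccos δ) ∧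
        (0 : EuclideanSpace ℝ (Fin (m + n - 1))) ∈ convexHull ℝ (f '' ↑X)}

namespace BorsukStmt18Aux

open Finset Filter

set_option maxHeartbeats 1000000

noncomputable section Witness
variable {n N k : ℕ}

def Fmap (n N : ℕ) (v : EuclideanSpace ℝ (Fin n))
    (a : ↥(piAntidiag (Finset.univ : Finset (Fin n)) N)) : ℝ :=
  Real.sqrt (Nat.multinomial Finset.univ a.1) * ∏ j, v j ^ (a.1 j)

def fmap (n N k : ℕ)
    (ι : ↥(piAntidiag (Finset.univ : Finset (Fin n)) N) ↪ Fin k)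
    (v : EuclideanSpace ℝ (Fin n)) : EuclideanSpace ℝ (Fin k) :=
  (WithLp.equiv 2 _).symm (Function.extend ι (Fmap n N v) 0)

lemma fmap_apply_emb (ι : ↥(piAntidiag (Finset.univ : Finset (Fin n)) N) ↪ Fin k)
    (v : EuclideanSpace ℝ (Fin n)) (a) :
    fmap n N k ι v (ι a) = Fmap n N v a := ι.injective.extend_apply _ (0 : Fin k → ℝ) a

lemma fmap_apply_not (ι : ↥(piAntidiag (Finset.univ : Finset (Fin n)) N) ↪ Fin k)
    (v : EuclideanSpace ℝ (Fin n)) (i : Fin k) (h : ¬ ∃ a, ι a = i) :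
    fmap n N k ι v i = 0 := by
  show Function.extend ι (Fmap n N v) 0 i = 0
  rw [Function.extend_apply' _ _ _ h]; rfl

lemma cont_coord (j : Fin n) : Continuous fun v : EuclideanSpace ℝ (Fin n) => v j :=
  (continuous_apply j).comp (PiLp.continuousLinearEquiv 2 ℝ (fun _ : Fin n => ℝ)).continuous

lemma fmap_cont (ι : ↥(piAntidiag (Finset.univ : Finset (Fin n)) N) ↪ Fin k) :
    Continuous (fmap n N k ι) := by
  have hF : ∀ a, Continuous fun v : EuclideanSpace ℝ (Fin n) => Fmap n N v a := by
    intro a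
    exact continuous_const.mul (continuous_finset_prod _ fun j _ => (cont_coord j).pow _)
  have : Continuous fun (v : EuclideanSpace ℝ (Fin n)) (i : Fin k) =>
      Function.extend ι (Fmap n N v) 0 i := by
    refine continuous_pi fun i => ?_
    by_cases h : ∃ a, ι a = i
    · obtain ⟨a, rfl⟩ := h
      simp only [ι.injective.extend_apply]
      exact hF a
    · simp only [Function.extend_apply' _ _ _ h]
      exact continuous_const
  exact ((PiLp.continuousLinearEquiv 2 ℝ (fun _ : Fin k => ℝ)).symm.continuous).comp this

lemma fmap_odd (hN : Odd N) (ι : ↥(piAntidiag (Finset.univ : Finset (Fin n)) N) ↪ Fin k)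
    (v : EuclideanSpace ℝ (Fin n)) : fmap n N k ι (-v) = - fmap n N k ι v := by
  have hF : ∀ a, Fmap n N (-v) a = - Fmap n N v a := by
    intro a
    unfold Fmap
    have h1 : ∀ j : Fin n, (-v) j = -(v j) := fun j => rfl
    have : (∏ j, (-v) j ^ (a.1 j)) = (-1 : ℝ) ^ (∑ j, a.1 j) * ∏ j, v j ^ (a.1 j) := by
      rw [← Finset.prod_pow_eq_pow_sum, ← Finset.prod_mul_distrib]
      refine Finset.prod_congr rfl fun j _ => ?_
      rw [h1, neg_pow]
    rw [this, (Finset.mem_piAntidiag.mp a.2).1, hN.neg_one_pow]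
    ring
  ext i
  simp only [PiLp.neg_apply]
  by_cases h : ∃ a, ι a = i
  · obtain ⟨a, rfl⟩ := h
    rw [fmap_apply_emb, fmap_apply_emb, hF]
  · rw [fmap_apply_not _ _ _ h, fmap_apply_not _ _ _ h, neg_zero]

lemma fmap_inner (ι : ↥(piAntidiag (Finset.univ : Finset (Fin n)) N) ↪ Fin k)
    (v w : EuclideanSpace ℝ (Fin n)) :
    ⟪fmap n N k ι v, fmap n N k ι w⟫ = ⟪v, w⟫ ^ N := by
  have hvw : ⟪v, w⟫ = ∑ j, v j * w j := by
    simp [PiLp.inner_apply, RCLike.inner_apply, starRingEnd_apply, star_trivial, mul_comm]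
  have hlhs : ⟪fmap n N k ι v, fmap n N k ι w⟫ = ∑ i, fmap n N k ι v i * fmap n N k ι w i := by
    simp [PiLp.inner_apply, RCLike.inner_apply, starRingEnd_apply, star_trivial, mul_comm]
  rw [hvw, hlhs,
    Finset.sum_pow_eq_sum_piAntidiag Finset.univ (fun j => v j * w j) N]
  have step1 : ∑ i, fmap n N k ι v i * fmap n N k ι w i
      = ∑ i ∈ Finset.univ.image ι, fmap n N k ι v i * fmap n N k ι w i := by
    refine (Finset.sum_subset (Finset.subset_univ _) fun i _ hi => ?_).symm
    have h : ¬ ∃ a, ι a = i := by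
      rintro ⟨a, rfl⟩
      exact hi (Finset.mem_image.mpr ⟨a, Finset.mem_univ a, rfl⟩)
    rw [fmap_apply_not _ _ _ h, zero_mul]
  rw [step1, Finset.sum_image (fun a _ b _ h => ι.injective h)]
  have step2 : ∀ a : ↥(piAntidiag (Finset.univ : Finset (Fin n)) N),
      fmap n N k ι v (ι a) * fmap n N k ι w (ι a)
        = (Nat.multinomial Finset.univ a.1 : ℝ) * ∏ j, (v j * w j) ^ (a.1 j) := by
    intro a
    rw [fmap_apply_emb, fmap_apply_emb]
    unfold Fmap
    rw [mul_mul_mul_comm, Real.mul_self_sqrt (by positivity), ← Finset.prod_mul_distrib]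
    congr 1
    exact Finset.prod_congr rfl fun j _ => (mul_pow _ _ _).symm
  rw [Finset.sum_congr rfl fun a _ => step2 a]
  exact Finset.sum_coe_sort _ (fun a => (Nat.multinomial Finset.univ a : ℝ) * ∏ j, (v j * w j) ^ (a j))
end Witness

lemma fiber_sum {ι E : Type*} [DecidableEq E] (t : Finset ι) (X : Finset E) (g : ι → E)
    (hg : ∀ i ∈ t, g i ∈ X) (w : ι → ℝ) (h : E → ℝ) :
    ∑ i ∈ t, w i * h (g i)
      = ∑ p ∈ X, (∑ i ∈ t.filter (fun i => g i = p), w i) * h p := by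
  rw [← Finset.sum_fiberwise_of_maps_to hg (fun i => w i * h (g i))]
  refine Finset.sum_congr rfl fun p hp => ?_
  rw [Finset.sum_mul]
  refine Finset.sum_congr rfl fun i hi => ?_
  rw [(Finset.mem_filter.mp hi).2]

lemma card_piAntidiag_le (n N : ℕ) :
    (piAntidiag (Finset.univ : Finset (Fin n)) N).card ≤ (N + 1) ^ n := by
  classical
  have h := Finset.card_le_card_of_injOn
    (f := fun (α : Fin n → ℕ) (j : Fin n) =>
      (⟨min (α j) N, Nat.lt_succ_of_le (min_le_right _ _)⟩ : Fin (N + 1)))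
    (s := piAntidiag (Finset.univ : Finset (Fin n)) N)
    (t := (Finset.univ : Finset (Fin n → Fin (N + 1))))
    (fun _ _ => Finset.mem_univ _) ?inj
  · calc (piAntidiag (Finset.univ : Finset (Fin n)) N).card
        ≤ (Finset.univ : Finset (Fin n → Fin (N + 1))).card := h
      _ = (N + 1) ^ n := by simp [Finset.card_univ, Fintype.card_fun]
  · intro a ha b hb hab
    have hle : ∀ (α : Fin n → ℕ), α ∈ piAntidiag (Finset.univ : Finset (Fin n)) N →
        ∀ j, α j ≤ N := by
      intro α hα j
      have h1 := (Finset.mem_piAntidiag.mp hα).1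
      calc α j ≤ ∑ i, α i := Finset.single_le_sum (fun i _ => Nat.zero_le _) (Finset.mem_univ j)
        _ = N := h1
    funext j
    have := congrFun hab j
    simp only [Fin.mk.injEq] at this
    rw [min_eq_left (hle a ha j), min_eq_left (hle b hb j)] at this
    exact this

lemma aux_notMem (n m N : ℕ) (hn : 1 < n) (hN : Odd N) (δ δ₀ : ℝ)
    (hδ0 : 0 < δ) (hδδ0 : δ ≤ δ₀) (hδ₀1 : δ₀ < 1)
    (hdim : (N + 1) ^ n ≤ m) (hsmall : ((m + n : ℕ) : ℝ) * δ₀ ^ N < 1) :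
    δ ∉ BorsukSet m n := by
  classical
  rintro ⟨hIoc, H⟩
  have hδ₀0 : 0 < δ₀ := lt_of_lt_of_le hδ0 hδδ0
  have hcard : Fintype.card ↥(piAntidiag (Finset.univ : Finset (Fin n)) N)
      ≤ Fintype.card (Fin (m + n - 1)) := by
    rw [Fintype.card_coe, Fintype.card_fin]
    have := card_piAntidiag_le n N
    omega
  obtain ⟨ι⟩ := Function.Embedding.nonempty_of_card_le hcard
  set E := EuclideanSpace ℝ (Fin n)
  set f := fmap n N (m + n - 1) ι with hf
  obtain ⟨X, hXs, hXcard, hXdiam, hXhull⟩ :=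
    H f (fmap_cont ι).continuousOn (fun v _ => fmap_odd hN ι v)
  rw [_root_.convexHull_eq] at hXhull
  obtain ⟨κ, t, w, z, hw0, hw1, hz, hcm⟩ := hXhull
  rw [Finset.centerMass_eq_of_sum_1 _ _ hw1] at hcm
  have hex : ∀ i, ∃ x : E, i ∈ t → x ∈ X ∧ f x = z i := by
    intro i
    by_cases hi : i ∈ t
    · obtain ⟨x, hx1, hx2⟩ := hz i hi
      exact ⟨x, fun _ => ⟨hx1, hx2⟩⟩
    · exact ⟨0, fun h => absurd h hi⟩
  choose g hg using hex
  have hmap : ∀ i ∈ t, g i ∈ X := fun i hi => (hg i hi).1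
  set K : E → E → ℝ := fun p q => ⟪p, q⟫ ^ N with hK
  set ν : E → ℝ := fun p => ∑ i ∈ t.filter (fun i => g i = p), w i with hν
  -- T = 0
  have hcm' : ∑ i ∈ t, w i • f (g i) = 0 := by
    rw [Finset.sum_congr rfl fun i hi => by rw [(hg i hi).2]]
    exact hcm
  have hT : ∑ i ∈ t, ∑ j ∈ t, w i * w j * K (g i) (g j) = 0 := by
    calc ∑ i ∈ t, ∑ j ∈ t, w i * w j * K (g i) (g j)
        = ⟪∑ i ∈ t, w i • f (g i), ∑ j ∈ t, w j • f (g j)⟫ := by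
          rw [sum_inner]
          refine Finset.sum_congr rfl fun i _ => ?_
          rw [inner_sum]
          refine Finset.sum_congr rfl fun j _ => ?_
          rw [real_inner_smul_left, real_inner_smul_right, hf, fmap_inner]
          ring
      _ = 0 := by rw [hcm', inner_zero_left]
  have hfib : ∀ h : E → ℝ, ∑ i ∈ t, w i * h (g i) = ∑ p ∈ X, ν p * h p := by
    intro h
    simp only [hν]
    exact fiber_sum t X g hmap w h
  have hST : ∑ p ∈ X, ∑ q ∈ X, ν p * ν q * K p q = 0 := by
    rw [← hT]
    calc ∑ p ∈ X, ∑ q ∈ X, ν p * ν q * K p q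
        = ∑ q ∈ X, ν q * ∑ p ∈ X, ν p * K p q := by
          rw [Finset.sum_comm]
          refine Finset.sum_congr rfl fun q _ => ?_
          rw [Finset.mul_sum]
          exact Finset.sum_congr rfl fun p _ => by ring
      _ = ∑ q ∈ X, ν q * ∑ i ∈ t, w i * K (g i) q := by
          refine Finset.sum_congr rfl fun q _ => ?_
          rw [hfib (fun p => K p q)]
      _ = ∑ i ∈ t, w i * ∑ q ∈ X, ν q * K (g i) q := by
          simp_rw [Finset.mul_sum]
          rw [Finset.sum_comm]
          exact Finset.sum_congr rfl fun i _ => Finset.sum_congr rfl fun q _ => by ring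
      _ = ∑ i ∈ t, ∑ j ∈ t, w i * w j * K (g i) (g j) := by
          refine Finset.sum_congr rfl fun i _ => ?_
          rw [← hfib (fun q => K (g i) q), Finset.mul_sum]
          exact Finset.sum_congr rfl fun j _ => by ring
  -- basic facts about ν
  have hν0 : ∀ p, 0 ≤ ν p := fun p =>
    Finset.sum_nonneg fun i hi => hw0 i (Finset.mem_filter.mp hi).1
  have hν1 : ∑ p ∈ X, ν p = 1 := by
    have := Finset.sum_fiberwise_of_maps_to hmap w
    simp only [hν]
    rw [this, hw1]
  -- kernel bounds
  have hnorm : ∀ p ∈ X, ‖p‖ = 1 := fun p hp =>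
    mem_sphere_zero_iff_norm.mp (hXs (Finset.mem_coe.mpr hp))
  have hKdiag : ∀ p ∈ X, K p p = 1 := by
    intro p hp
    have : ⟪p, p⟫ = 1 := by
      rw [real_inner_self_eq_norm_sq, hnorm p hp, one_pow]
    simp only [hK, this, one_pow]
  have hinner_lb : ∀ p ∈ X, ∀ q ∈ X, -δ₀ ≤ ⟪p, q⟫ := by
    intro p hp q hq
    have habs : |⟪p, q⟫| ≤ 1 := by
      have h := abs_real_inner_le_norm p q
      rw [hnorm p hp, hnorm q hq, one_mul] at h
      exact h
    by_contra hlt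
    push_neg at hlt
    have hlt' : ⟪p, q⟫ < -δ := lt_of_lt_of_le hlt (by linarith)
    have hmem1 : ⟪p, q⟫ ∈ Set.Icc (-1 : ℝ) 1 := abs_le.mp habs
    have hmem2 : (-δ : ℝ) ∈ Set.Icc (-1 : ℝ) 1 := by
      constructor <;> [linarith; linarith]
    have h1 : Real.arccos (-δ) < Real.arccos ⟪p, q⟫ :=
      Real.strictAntiOn_arccos hmem1 hmem2 hlt'
    have h2 := hXdiam p hp q hq
    rw [← Real.arccos_neg δ] at h2
    linarith
  have hKlb : ∀ p ∈ X, ∀ q ∈ X, -(δ₀ ^ N) ≤ K p q := by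
    intro p hp q hq
    have h1 : (-δ₀ : ℝ) ^ N ≤ ⟪p, q⟫ ^ N :=
      (Odd.strictMono_pow (R := ℝ) hN).monotone (hinner_lb p hp q hq)
    rw [hN.neg_pow] at h1
    exact h1
  have hδ₀N : (0 : ℝ) ≤ δ₀ ^ N := le_of_lt (pow_pos hδ₀0 N)
  -- main chain
  have e1 : ∀ p ∈ X, ν p ^ 2 + (-(δ₀ ^ N)) * ∑ q ∈ X.erase p, ν p * ν q
      ≤ ∑ q ∈ X, ν p * ν q * K p q := by
    intro p hp
    rw [← Finset.add_sum_erase X (fun q => ν p * ν q * K p q) hp]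
    refine add_le_add ?_ ?_
    · rw [hKdiag p hp]
      nlinarith [hν0 p]
    · rw [Finset.mul_sum]
      refine Finset.sum_le_sum fun q hq => ?_
      have hq' : q ∈ X := Finset.mem_of_mem_erase hq
      have hnn : 0 ≤ ν p * ν q := mul_nonneg (hν0 p) (hν0 q)
      nlinarith [hKlb p hp q hq', hnn]
  have e2 : ∑ p ∈ X, (ν p ^ 2 + (-(δ₀ ^ N)) * ∑ q ∈ X.erase p, ν p * ν q) ≤ 0 := by
    calc ∑ p ∈ X, (ν p ^ 2 + (-(δ₀ ^ N)) * ∑ q ∈ X.erase p, ν p * ν q)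
        ≤ ∑ p ∈ X, ∑ q ∈ X, ν p * ν q * K p q := Finset.sum_le_sum e1
      _ = 0 := hST
  have e3 : ∑ p ∈ X, ∑ q ∈ X.erase p, ν p * ν q ≤ 1 := by
    calc ∑ p ∈ X, ∑ q ∈ X.erase p, ν p * ν q
        ≤ ∑ p ∈ X, ∑ q ∈ X, ν p * ν q := by
          refine Finset.sum_le_sum fun p hp => ?_
          exact Finset.sum_le_sum_of_subset_of_nonneg (Finset.erase_subset p X)
            (fun q _ _ => mul_nonneg (hν0 p) (hν0 q))
      _ = (∑ p ∈ X, ν p) * (∑ q ∈ X, ν q) := by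
          rw [Finset.sum_mul_sum]
      _ = 1 := by rw [hν1, one_mul]
  have e4 : ∑ p ∈ X, ν p ^ 2 ≤ δ₀ ^ N * ∑ p ∈ X, ∑ q ∈ X.erase p, ν p * ν q := by
    have hsplit : ∑ p ∈ X, (ν p ^ 2 + (-(δ₀ ^ N)) * ∑ q ∈ X.erase p, ν p * ν q)
        = ∑ p ∈ X, ν p ^ 2 - δ₀ ^ N * ∑ p ∈ X, ∑ q ∈ X.erase p, ν p * ν q := by
      rw [Finset.sum_add_distrib, ← Finset.mul_sum]
      ring
    linarith [e2, hsplit.symm.le, hsplit.le]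
  have key : ∑ p ∈ X, ν p ^ 2 ≤ δ₀ ^ N := by
    nlinarith [e3, e4, hδ₀N]
  have hcs : (1 : ℝ) ≤ (#X : ℝ) * ∑ p ∈ X, ν p ^ 2 := by
    have h := sq_sum_le_card_mul_sum_sq (s := X) (f := ν)
    rw [hν1, one_pow] at h
    exact h
  have hsum_sq_nonneg : (0 : ℝ) ≤ ∑ p ∈ X, ν p ^ 2 :=
    Finset.sum_nonneg fun p _ => sq_nonneg _
  have hXcard' : (#X : ℝ) ≤ ((m + n : ℕ) : ℝ) := Nat.cast_le.mpr hXcard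
  have hfinal : (1 : ℝ) ≤ ((m + n : ℕ) : ℝ) * δ₀ ^ N := by
    calc (1 : ℝ) ≤ (#X : ℝ) * ∑ p ∈ X, ν p ^ 2 := hcs
      _ ≤ (#X : ℝ) * δ₀ ^ N := by
          exact mul_le_mul_of_nonneg_left key (Nat.cast_nonneg _)
      _ ≤ ((m + n : ℕ) : ℝ) * δ₀ ^ N := mul_le_mul_of_nonneg_right hXcard' hδ₀N
  linarith

lemma geo_tendsto (n : ℕ) (δ₀ : ℝ) (h0 : 0 < δ₀) (h1 : δ₀ < 1) :
    Tendsto (fun j : ℕ => ((2 * (j : ℝ) + 6) ^ n + n) * δ₀ ^ (2 * j + 3)) atTop (nhds 0) := by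
  set r : ℝ := δ₀ ^ 2 with hr
  have hr0 : 0 ≤ r := sq_nonneg _
  have hr1 : r < 1 := by nlinarith
  have T1 : Tendsto (fun i : ℕ => (i : ℝ) ^ n * r ^ i) atTop (nhds 0) :=
    tendsto_pow_const_mul_const_pow_of_lt_one n hr0 hr1
  have T2 : Tendsto (fun j : ℕ => ((j + 1 : ℕ) : ℝ) ^ n * r ^ (j + 1)) atTop (nhds 0) :=
    T1.comp (tendsto_add_atTop_nat 1)
  have T3 : Tendsto (fun j : ℕ =>
      (((n : ℝ) + 1) * 8 ^ n * δ₀) * (((j + 1 : ℕ) : ℝ) ^ n * r ^ (j + 1))) atTop (nhds 0) := by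
    have := T2.const_mul (((n : ℝ) + 1) * 8 ^ n * δ₀)
    simpa using this
  refine squeeze_zero (fun j => ?_) (fun j => ?_) T3
  · positivity
  · have hj1 : (0:ℝ) ≤ (j : ℝ) := Nat.cast_nonneg j
    have hbase : (2 * (j : ℝ) + 6) ≤ 8 * ((j : ℝ) + 1) := by linarith
    have hb0 : (0:ℝ) ≤ 2 * (j : ℝ) + 6 := by linarith
    have hpow : (2 * (j : ℝ) + 6) ^ n ≤ (8 * ((j : ℝ) + 1)) ^ n :=
      pow_le_pow_left₀ hb0 hbase n
    have h8 : (1:ℝ) ≤ (8 * ((j : ℝ) + 1)) ^ n := by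
      have := pow_le_pow_left₀ (by norm_num : (0:ℝ) ≤ 1) (by linarith : (1:ℝ) ≤ 8 * ((j:ℝ)+1)) n
      simpa using this
    have hcoef : (2 * (j : ℝ) + 6) ^ n + n ≤ ((n : ℝ) + 1) * (8 * ((j : ℝ) + 1)) ^ n := by
      have : (n : ℝ) ≤ (n : ℝ) * (8 * ((j : ℝ) + 1)) ^ n := by
        nlinarith [Nat.cast_nonneg (α := ℝ) n]
      nlinarith
    have hδpow : δ₀ ^ (2 * j + 3) = δ₀ * r ^ (j + 1) := by
      rw [hr, ← pow_mul]
      ring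
    have hsplit : (8 * ((j : ℝ) + 1)) ^ n = 8 ^ n * ((j:ℝ) + 1) ^ n := mul_pow _ _ _
    have hcast : ((j + 1 : ℕ) : ℝ) = (j : ℝ) + 1 := by push_cast; ring
    rw [hδpow, hcast]
    have hδr : 0 ≤ δ₀ * r ^ (j+1) := by positivity
    calc ((2 * (j : ℝ) + 6) ^ n + n) * (δ₀ * r ^ (j + 1))
        ≤ (((n : ℝ) + 1) * (8 * ((j : ℝ) + 1)) ^ n) * (δ₀ * r ^ (j + 1)) :=
          mul_le_mul_of_nonneg_right hcoef hδr
      _ = (((n : ℝ) + 1) * 8 ^ n * δ₀) * (((j : ℝ) + 1) ^ n * r ^ (j + 1)) := by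
          rw [hsplit]; ring

lemma exists_good (n : ℕ) (hn : 1 < n) (δ₀ : ℝ) (h0 : 0 < δ₀) (h1 : δ₀ < 1) :
    ∀ᶠ m in atTop, ∃ N, Odd N ∧ (N + 1) ^ n ≤ m ∧ ((m + n : ℕ) : ℝ) * δ₀ ^ N < 1 := by
  classical
  obtain ⟨J₀, hJ₀⟩ := eventually_atTop.mp
    ((geo_tendsto n δ₀ h0 h1).eventually_lt_const one_pos)
  rw [eventually_atTop]
  refine ⟨max (4 ^ n) (max ((2 * J₀ + 4) ^ n) J₀), fun m hm => ?_⟩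
  have hm4 : 4 ^ n ≤ m := le_trans (le_max_left _ _) hm
  have hmJ : (2 * J₀ + 4) ^ n ≤ m := le_trans (le_trans (le_max_left _ _) (le_max_right _ _)) hm
  have hmJ' : J₀ ≤ m := le_trans (le_trans (le_max_right _ _) (le_max_right _ _)) hm
  set P : ℕ → Prop := fun j => (2 * j + 4) ^ n ≤ m with hPdef
  have hP0 : P 0 := by simpa [hPdef] using hm4
  set j := Nat.findGreatest P m with hjdef
  have hspec : P j := Nat.findGreatest_spec (Nat.zero_le m) hP0
  have hjJ : J₀ ≤ j := Nat.le_findGreatest hmJ' hmJ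
  have hjm : j < m := by
    rcases lt_or_eq_of_le (Nat.findGreatest_le (P := P) m) with h | h
    · exact h
    · exfalso
      have hPm : P m := h ▸ hspec
      have hle : 2 * m + 4 ≤ (2 * m + 4) ^ n := Nat.le_self_pow (by omega) _
      have := hPm
      simp only [hPdef] at this
      omega
  have hnot : ¬ P (j + 1) := Nat.findGreatest_is_greatest (P := P) (n := m) (by omega) (by omega)
  have hub : m < (2 * j + 6) ^ n := by
    have := hnot
    simp only [hPdef] at this
    have heq : 2 * (j + 1) + 4 = 2 * j + 6 := by ring
    rw [heq] at this
    omega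
  refine ⟨2 * j + 3, ⟨j + 1, by ring⟩, ?_, ?_⟩
  · have : 2 * j + 3 + 1 = 2 * j + 4 := by ring
    rw [this]
    simpa [hPdef] using hspec
  · have hCj : ((2 * (j : ℝ) + 6) ^ n + n) * δ₀ ^ (2 * j + 3) < 1 := hJ₀ j hjJ
    have hδN : (0:ℝ) < δ₀ ^ (2 * j + 3) := pow_pos h0 _
    have hcast : ((m + n : ℕ) : ℝ) < (2 * (j : ℝ) + 6) ^ n + n := by
      have h2 : (m : ℝ) < ((2 * j + 6 : ℕ) : ℝ) ^ n := by
        have := hub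
        exact_mod_cast Nat.cast_lt.mpr (by exact_mod_cast this)
      push_cast at h2 ⊢
      linarith
    calc ((m + n : ℕ) : ℝ) * δ₀ ^ (2 * j + 3)
        ≤ ((2 * (j : ℝ) + 6) ^ n + n) * δ₀ ^ (2 * j + 3) := by
          apply mul_le_mul_of_nonneg_right (le_of_lt hcast) (le_of_lt hδN)
      _ < 1 := hCj

lemma borsuk_lower (n : ℕ) (hn : 1 < n) (ε : ℝ) (hε : 0 < ε) :
    ∀ᶠ m in atTop, ∀ δ ∈ BorsukSet m n, 1 - ε < δ := by
  rcases le_or_gt 1 ε with h | h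
  · exact Filter.Eventually.of_forall fun m δ hδ => lt_of_le_of_lt (by linarith) hδ.1.1
  · have h0 : 0 < 1 - ε := by linarith
    have h1 : 1 - ε < 1 := by linarith
    filter_upwards [exists_good n hn (1 - ε) h0 h1] with m hm δ hδ
    obtain ⟨N, hN, hdim, hsmall⟩ := hm
    by_contra hc
    push_neg at hc
    exact aux_notMem n m N hn hN δ (1 - ε) hδ.1.1 hc h1 hdim hsmall hδ

end BorsukStmt18Aux

/-- Theorem 4.2(vi) of the paper. Fix `n > 1` and let `d m = δ(m, n)`
(the least element of `BorsukSet m n`).  Then `δ(m, n) → 1` as `m → ∞`, and hence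
`π - arccos (δ(m, n)) → π`. -/
theorem stmt18 (n : ℕ) (hn : 1 < n) (d : ℕ → ℝ)
    (hd : ∀ m, 1 ≤ m → IsLeast (BorsukSet m n) (d m)) :
    Filter.Tendsto d Filter.atTop (nhds 1) ∧
    Filter.Tendsto (fun m => Real.pi - Real.arccos (d m)) Filter.atTop
      (nhds Real.pi) := by
  have hone : Filter.Tendsto d Filter.atTop (nhds 1) := by
    apply tendsto_order.mpr
    constructor
    · intro a ha
      have hε : 0 < 1 - a := by linarith
      filter_upwards [BorsukStmt18Aux.borsuk_lower n hn (1 - a) hε,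
        Filter.eventually_ge_atTop 1] with m hm hm1
      have hdm := (hd m hm1).1
      have := hm (d m) hdm
      linarith
    · intro a ha
      filter_upwards [Filter.eventually_ge_atTop 1] with m hm1
      exact lt_of_le_of_lt (hd m hm1).1.1.2 ha
  refine ⟨hone, ?_⟩
  have harccos : Filter.Tendsto (fun m => Real.arccos (d m)) Filter.atTop
      (nhds (Real.arccos 1)) := (Real.continuous_arccos.tendsto 1).comp hone
  rw [Real.arccos_one] at harccos
  have hfin := Filter.Tendsto.sub
    (tendsto_const_nhds : Filter.Tendsto (fun _ : ℕ => Real.pi) Filter.atTop (nhds Real.pi))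
    harccos
  simpa using hfin
end

section
/- Fix an integer n > 1. For any real number α < 1/(n−1), one has m^α · (1 − δ(m,n)) → 0 as m → ∞. -/
open Metric RealInnerProductSpace

noncomputable section

lemma coord_le_norm {n : ℕ} (v : EuclideanSpace ℝ (Fin n)) (i : Fin n) : |v i| ≤ ‖v‖ := by
  rw [EuclideanSpace.norm_eq]
  have h1 : |v i| = Real.sqrt (‖v i‖ ^ 2) := by
    rw [Real.sqrt_sq_eq_abs]; simp [Real.norm_eq_abs, abs_abs]
  rw [h1]
  apply Real.sqrt_le_sqrt
  exact Finset.single_le_sum (f := fun j => ‖v j‖ ^ 2) (fun j _ => by positivity) (Finset.mem_univ i)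

lemma cover_lemma (n : ℕ) (hn : 0 < n) (ε : ℝ) (hε0 : 0 < ε) (hε1 : ε ≤ 1) :
    ∃ T : Finset (EuclideanSpace ℝ (Fin n)),
      (↑T ⊆ sphere (0 : EuclideanSpace ℝ (Fin n)) 1) ∧
      ((T.card : ℝ) ≤ (9 * n / ε) ^ n) ∧
      ∀ v ∈ sphere (0 : EuclideanSpace ℝ (Fin n)) 1, ∃ u ∈ T, ‖v - u‖ ≤ ε := by
  classical
  set sn : ℝ := Real.sqrt n with hsn
  have hsn1 : 1 ≤ sn := by
    rw [hsn, show (1:ℝ) = Real.sqrt 1 by simp]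
    exact Real.sqrt_le_sqrt (by exact_mod_cast hn)
  have hsn0 : 0 < sn := lt_of_lt_of_le one_pos hsn1
  have hsnsq : sn ^ 2 = n := Real.sq_sqrt (by positivity)
  set h : ℝ := ε / sn with hh
  have hh0 : 0 < h := by positivity
  set M : ℕ := ⌈1 / h⌉₊ + 1 with hM
  have hMge : 1 / h + 1 / 2 ≤ (M : ℝ) := by
    have h1 := Nat.le_ceil (1 / h)
    have h2 : ((M : ℝ)) = (⌈1/h⌉₊ : ℝ) + 1 := by rw [hM]; push_cast; ring
    linarith
  have hMle : (M : ℝ) ≤ 1 / h + 2 := by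
    have h1 := Nat.ceil_lt_add_one (a := 1/h) (by positivity)
    have h2 : ((M : ℝ)) = (⌈1/h⌉₊ : ℝ) + 1 := by rw [hM]; push_cast; ring
    linarith
  set G : Finset (Fin n → ℤ) := Fintype.piFinset fun _ => Finset.Icc (-(M : ℤ)) (M : ℤ) with hG
  have hGcard : G.card = (2 * M + 1) ^ n := by
    rw [hG, Fintype.card_piFinset]
    have : (Finset.Icc (-(M : ℤ)) (M : ℤ)).card = 2 * M + 1 := by
      rw [Int.card_Icc]; omega
    simp [this]
  set w : (Fin n → ℤ) → EuclideanSpace ℝ (Fin n) :=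
    fun z => (WithLp.toLp 2 (fun i => h * (z i : ℝ)) : EuclideanSpace ℝ (Fin n)) with hw
  set u₀ : EuclideanSpace ℝ (Fin n) := EuclideanSpace.single ⟨0, hn⟩ 1 with hu₀
  set ψ : (Fin n → ℤ) → EuclideanSpace ℝ (Fin n) :=
    fun z => if ‖w z‖ = 0 then u₀ else ‖w z‖⁻¹ • w z with hψ
  refine ⟨G.image ψ, ?_, ?_, ?_⟩
  · intro u hu
    simp only [Finset.coe_image, Set.mem_image, Finset.mem_coe] at hu
    obtain ⟨z, _, rfl⟩ := hu
    rw [mem_sphere_zero_iff_norm, hψ]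
    by_cases hz : ‖w z‖ = 0
    · simp [hz, hu₀, EuclideanSpace.norm_single]
    · simp only [hz, if_false, norm_smul, norm_inv, norm_norm]
      field_simp
  · calc ((G.image ψ).card : ℝ) ≤ (G.card : ℝ) := by exact_mod_cast Finset.card_image_le
    _ = ((2 * M + 1 : ℕ) : ℝ) ^ n := by rw [hGcard]; push_cast; ring
    _ ≤ (9 * n / ε) ^ n := by
        apply pow_le_pow_left₀ (by positivity)
        have h1 : 1 / h = sn / ε := by rw [hh]; field_simp
        have hsn_le : sn ≤ (n : ℝ) := by
          calc sn ≤ sn * sn := le_mul_of_one_le_left (le_of_lt hsn0) hsn1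
          _ = (n:ℝ) := by rw [← sq]; exact hsnsq
        have h5 : (1:ℝ) ≤ n / ε := by
          rw [le_div_iff₀ hε0]
          have : (1:ℝ) ≤ n := by exact_mod_cast hn
          linarith
        have h6 : sn / ε ≤ n / ε := by gcongr
        have hcast : ((2 * M + 1 : ℕ) : ℝ) = 2 * (M:ℝ) + 1 := by push_cast; ring
        have h8 : 9 * (n:ℝ) / ε = 9 * ((n:ℝ)/ε) := by ring
        rw [hcast]
        linarith
  · intro v hv
    rw [mem_sphere_zero_iff_norm] at hv
    set z : Fin n → ℤ := fun i => round (v i / h) with hz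
    have hzG : z ∈ G := by
      rw [hG, Fintype.mem_piFinset]
      intro i
      rw [Finset.mem_Icc, ← abs_le]
      have hb : |(z i : ℝ)| ≤ (M : ℝ) := by
        have h1 : |(z i : ℝ) - v i / h| ≤ 1/2 := by
          rw [hz]; simpa [abs_sub_comm] using abs_sub_round (v i / h)
        have hvi : |v i| ≤ 1 := hv ▸ coord_le_norm v i
        have h2 : |v i / h| ≤ 1 / h := by
          rw [abs_div, abs_of_pos hh0]; gcongr
        calc |(z i : ℝ)| ≤ |v i / h| + 1/2 := by
              have := abs_sub_abs_le_abs_sub ((z i : ℝ)) (v i / h)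
              linarith [abs_nonneg ((z i:ℝ) - v i / h)]
        _ ≤ 1/h + 1/2 := by linarith
        _ ≤ M := hMge
      exact_mod_cast (by push_cast at hb ⊢; exact hb : |((z i : ℤ) : ℝ)| ≤ ((M:ℤ):ℝ))
    have hcoord : ∀ i, |v i - h * (z i : ℝ)| ≤ h / 2 := by
      intro i
      have heq : v i - h * (z i : ℝ) = h * (v i / h - (z i : ℝ)) := by field_simp
      rw [heq, abs_mul, abs_of_pos hh0]
      calc h * |v i / h - (z i:ℝ)| ≤ h * (1/2) := by
            apply mul_le_mul_of_nonneg_left _ (le_of_lt hh0)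
            rw [hz]; exact abs_sub_round (v i / h)
      _ = h / 2 := by ring
    have hvw : ‖v - w z‖ ≤ ε / 2 := by
      rw [EuclideanSpace.norm_eq]
      have hb : ∀ i : Fin n, ‖(v - w z) i‖ ^ 2 ≤ (h/2)^2 := by
        intro i
        have hi : (v - w z) i = v i - h * (z i : ℝ) := by
          rw [PiLp.sub_apply]
        rw [hi, Real.norm_eq_abs, sq_abs]
        have h1 := hcoord i
        nlinarith [abs_nonneg (v i - h * (z i:ℝ)), sq_abs (v i - h * (z i : ℝ))]
      calc Real.sqrt (∑ i, ‖(v - w z) i‖ ^ 2) ≤ Real.sqrt (∑ _i : Fin n, (h/2)^2) :=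
            Real.sqrt_le_sqrt (Finset.sum_le_sum fun i _ => hb i)
      _ = Real.sqrt ((n:ℝ) * (h/2)^2) := by rw [Finset.sum_const]; simp [nsmul_eq_mul]
      _ = sn * (h/2) := by
          rw [Real.sqrt_mul (by positivity), Real.sqrt_sq (by positivity), hsn]
      _ = ε / 2 := by rw [hh]; field_simp
    have hwnorm : 1/2 ≤ ‖w z‖ := by
      have h1 := norm_sub_norm_le v (w z)
      rw [hv] at h1
      linarith
    have hwne : ¬ (‖w z‖ = 0) := by intro hc; rw [hc] at hwnorm; linarith
    refine ⟨ψ z, Finset.mem_image_of_mem _ hzG, ?_⟩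
    rw [hψ]
    simp only [hwne, if_false]
    have key : ‖w z - ‖w z‖⁻¹ • w z‖ = |‖w z‖ - 1| := by
      have heq : w z - ‖w z‖⁻¹ • w z = (1 - ‖w z‖⁻¹) • w z := by
        rw [sub_smul, one_smul]
      rw [heq, norm_smul, Real.norm_eq_abs]
      rw [show |1 - ‖w z‖⁻¹| * ‖w z‖ = |(1 - ‖w z‖⁻¹) * ‖w z‖| by
        rw [abs_mul, abs_of_nonneg (norm_nonneg _)]]
      rw [sub_mul, one_mul, inv_mul_cancel₀ hwne]
    have h3 : |‖w z‖ - 1| ≤ ε/2 := by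
      rw [← hv, abs_sub_comm]
      calc |‖v‖ - ‖w z‖| ≤ ‖v - w z‖ := abs_norm_sub_norm_le v (w z)
      _ ≤ ε/2 := hvw
    calc ‖v - ‖w z‖⁻¹ • w z‖ ≤ ‖v - w z‖ + ‖w z - ‖w z‖⁻¹ • w z‖ := by
          have heq : v - ‖w z‖⁻¹ • w z = (v - w z) + (w z - ‖w z‖⁻¹ • w z) := by abel
          rw [heq]; exact norm_add_le _ _
    _ ≤ ε/2 + ε/2 := by rw [key]; exact add_le_add hvw h3
    _ = ε := by ring


lemma key_ineq (n : ℕ) (hn : 1 < n) (m : ℕ) (hm : 1 ≤ m) (δ : ℝ)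
    (hδ : δ ∈ BorsukSet m n) (r : ℝ) (hr0 : 0 < r) (hr1 : r ≤ 1)
    (hcount : ((18 * n / r : ℝ)) ^ n ≤ (m : ℝ)) :
    1 - δ ≤ 2 * r ^ 2 := by
  classical
  obtain ⟨hδIoc, hf⟩ := hδ
  have hn0 : 0 < n := by omega
  obtain ⟨T, hT1, hT2, hT3⟩ := cover_lemma n hn0 (r / 2) (by positivity) (by linarith)
  have hTm : T.card ≤ m := by
    have h9 : (9 : ℝ) * n / (r / 2) = 18 * n / r := by field_simp; ring
    rw [h9] at hT2
    exact_mod_cast hT2.trans hcount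
  set k := m + n - 1 with hk
  have hmk : m ≤ k := by omega
  have hcard : Fintype.card ↥T ≤ Fintype.card (Fin k) := by
    rw [Fintype.card_coe, Fintype.card_fin]; omega
  obtain ⟨j⟩ : Nonempty (↥T ↪ Fin k) := Function.Embedding.nonempty_of_card_le hcard
  -- the bump function
  set bump : EuclideanSpace ℝ (Fin n) → EuclideanSpace ℝ (Fin n) → ℝ :=
    fun u v => max 0 (r - ‖v - u‖) - max 0 (r - ‖v + u‖) with hbump
  set f : EuclideanSpace ℝ (Fin n) → EuclideanSpace ℝ (Fin k) :=
    fun v => (WithLp.toLp 2 (fun i => ∑ u ∈ T.attach, if j u = i then bump u v else 0) :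
      EuclideanSpace ℝ (Fin k)) with hfdef
  have hfapp : ∀ v i, f v i = ∑ u ∈ T.attach, if j u = i then bump (u : _) v else 0 :=
    fun v i => rfl
  have hfu : ∀ (v) (u₀ : ↥T), f v (j u₀) = bump u₀ v := by
    intro v u₀
    rw [hfapp]
    rw [Finset.sum_eq_single_of_mem u₀ (Finset.mem_attach _ _)]
    · rw [if_pos rfl]
    · intro u _ hne
      exact if_neg fun h => hne (j.injective h)
  have hbump_cont : ∀ u : EuclideanSpace ℝ (Fin n), Continuous (bump u) := by
    intro u
    apply Continuous.sub
    · exact continuous_const.max (continuous_const.sub (continuous_id.sub continuous_const).norm)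
    · exact continuous_const.max (continuous_const.sub (continuous_id.add continuous_const).norm)
  have hfcont : Continuous f := by
    have h1 : Continuous (fun v => ((fun i => ∑ u ∈ T.attach, if j u = i then bump (u:_) v else 0) :
        Fin k → ℝ)) := by
      apply continuous_pi
      intro i
      apply continuous_finset_sum
      intro u _
      by_cases hju : j u = i
      · simpa [hju] using hbump_cont (u : EuclideanSpace ℝ (Fin n))
      · simp only [hju, if_false]
        exact continuous_const
    exact (PiLp.continuousLinearEquiv 2 ℝ (fun _ : Fin k => ℝ)).symm.continuous.comp h1
  have hbump_odd : ∀ u v, bump u (-v) = -bump u v := by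
    intro u v
    rw [hbump]
    simp only
    rw [show -v - u = -(v + u) by abel, show -v + u = -(v - u) by abel, norm_neg, norm_neg]
    ring
  have hfodd : ∀ v, f (-v) = -f v := by
    intro v
    ext i
    rw [PiLp.neg_apply, hfapp, hfapp, ← Finset.sum_neg_distrib]
    apply Finset.sum_congr rfl
    intro u _
    by_cases hju : j u = i
    · rw [if_pos hju, if_pos hju, hbump_odd]
    · rw [if_neg hju, if_neg hju, neg_zero]
  obtain ⟨X, hX1, hX2, hX3, hX4⟩ := hf f hfcont.continuousOn (fun v _ => hfodd v)
  -- there must be a nearly antipodal pair in X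
  have hpair : ∃ x ∈ X, ∃ y ∈ X, ‖x + y‖ ≤ 2 * r := by
    by_contra hpair
    push_neg at hpair
    set s : Fin k → ℝ := fun i => if ∀ x ∈ X, 0 ≤ f x i then 1 else -1 with hs
    set L : EuclideanSpace ℝ (Fin k) → ℝ := fun zz => ∑ i, s i * zz i with hL
    have hlin : IsLinearMap ℝ L := by
      constructor
      · intro a b
        rw [hL]
        simp only [PiLp.add_apply, mul_add]
        rw [Finset.sum_add_distrib]
      · intro c a
        rw [hL]
        simp only [PiLp.smul_apply, smul_eq_mul, Finset.mul_sum]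
        apply Finset.sum_congr rfl
        intro i _
        ring
    -- (F1) each coordinate has a consistent sign on X
    have hF1 : ∀ i, ∀ x ∈ X, 0 ≤ s i * f x i := by
      intro i x hx
      by_cases hp : ∀ x ∈ X, 0 ≤ f x i
      · rw [hs]; simp only [if_pos hp, one_mul]; exact hp x hx
      · rw [hs]; simp only [if_neg hp]
        push_neg at hp
        obtain ⟨y, hy, hyneg⟩ := hp
        -- the coordinate i must come from some u₀
        by_cases hi : ∃ u₀ : ↥T, j u₀ = i
        · obtain ⟨u₀, rfl⟩ := hi
          rw [hfu] at hyneg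
          have hyu : ‖y + (u₀ : EuclideanSpace ℝ (Fin n))‖ < r := by
            by_contra hc
            push_neg at hc
            have h1 : max 0 (r - ‖y + (u₀ : EuclideanSpace ℝ (Fin n))‖) = 0 :=
              max_eq_left (by linarith)
            rw [hbump] at hyneg
            simp only [h1] at hyneg
            have := le_max_left 0 (r - ‖y - (u₀ : EuclideanSpace ℝ (Fin n))‖)
            linarith
          have hxu : r < ‖x - (u₀ : EuclideanSpace ℝ (Fin n))‖ := by
            have h2 : ‖x + y‖ ≤ ‖x - (u₀ : EuclideanSpace ℝ (Fin n))‖ +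
                ‖y + (u₀ : EuclideanSpace ℝ (Fin n))‖ := by
              have : x + y = (x - (u₀ : EuclideanSpace ℝ (Fin n))) +
                  (y + (u₀ : EuclideanSpace ℝ (Fin n))) := by abel
              rw [this]; exact norm_add_le _ _
            have := hpair x hx y hy
            linarith
          rw [hfu, hbump]
          simp only [max_eq_left (by linarith : r - ‖x - (u₀ : EuclideanSpace ℝ (Fin n))‖ ≤ 0)]
          have := le_max_left 0 (r - ‖x + (u₀ : EuclideanSpace ℝ (Fin n))‖)
          nlinarith
        · push_neg at hi
          have : f x i = 0 := by
            rw [hfapp]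
            apply Finset.sum_eq_zero
            intro u _
            exact if_neg (hi u)
          rw [this]; ring_nf; exact le_refl 0
    -- (F2) L is positive on f '' X
    have hF2 : ∀ x ∈ X, 0 < L (f x) := by
      intro x hx
      have hxs : ‖x‖ = 1 := mem_sphere_zero_iff_norm.mp (hX1 hx)
      obtain ⟨u, huT, hucov⟩ := hT3 x (hX1 hx)
      have hus : ‖u‖ = 1 := mem_sphere_zero_iff_norm.mp (hT1 huT)
      set uT : ↥T := ⟨u, huT⟩ with huT
      -- parallelogram
      have hpar := parallelogram_law_with_norm ℝ x u
      have hxu_add : r < ‖x + u‖ := by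
        nlinarith [norm_nonneg (x + u), norm_nonneg (x - u)]
      have hbx : f x (j uT) = r - ‖x - u‖ := by
        rw [hfu, hbump]
        simp only [huT]
        rw [max_eq_right (by linarith), max_eq_left (by linarith)]
        ring
      have hbx2 : r / 2 ≤ f x (j uT) := by rw [hbx]; linarith
      have hsign : ∀ y ∈ X, 0 ≤ f y (j uT) := by
        intro y hy
        have hyu : r < ‖y + u‖ := by
          have h2 : ‖x + y‖ ≤ ‖y + u‖ + ‖x - u‖ := by
            have : x + y = (y + u) + (x - u) := by abel
            rw [this]; exact norm_add_le _ _
          have := hpair x hx y hy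
          linarith
        rw [hfu, hbump]
        simp only [huT]
        rw [max_eq_left (by linarith : r - ‖y + u‖ ≤ 0)]
        simpa using le_max_left 0 (r - ‖y - u‖)
      have hsi : s (j uT) = 1 := by rw [hs]; exact if_pos hsign
      rw [hL]
      apply Finset.sum_pos'
      · intro i _
        exact hF1 i x hx
      · exact ⟨j uT, Finset.mem_univ _, by rw [hsi, one_mul]; linarith⟩
    have hsub : f '' ↑X ⊆ {zz | 0 < L zz} := by
      rintro _ ⟨x, hx, rfl⟩
      exact hF2 x (by exact_mod_cast hx)
    have hhull := convexHull_min hsub (convex_halfSpace_gt hlin 0)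
    have h0 := hhull hX4
    simp only [Set.mem_setOf_eq, hL] at h0
    have : (∑ i, s i * (0 : EuclideanSpace ℝ (Fin k)) i) = 0 := by
      apply Finset.sum_eq_zero
      intro i _
      rw [PiLp.zero_apply, mul_zero]
    rw [this] at h0
    exact lt_irrefl 0 h0
  obtain ⟨x, hx, y, hy, hxy⟩ := hpair
  have hxs : ‖x‖ = 1 := mem_sphere_zero_iff_norm.mp (hX1 hx)
  have hys : ‖y‖ = 1 := mem_sphere_zero_iff_norm.mp (hX1 hy)
  have hinner_le : ⟪x, y⟫ ≤ 2 * r ^ 2 - 1 := by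
    have h1 := norm_add_sq_real x y
    nlinarith [norm_nonneg (x + y)]
  have hinner_ge : -δ ≤ ⟪x, y⟫ := by
    have ht : |⟪x, y⟫| ≤ 1 := by
      have := abs_real_inner_le_norm x y
      rw [hxs, hys] at this; linarith
    rw [abs_le] at ht
    have harc := hX3 x hx y hy
    have h1 : Real.cos (Real.pi - Real.arccos δ) ≤ Real.cos (Real.arccos ⟪x, y⟫) :=
      Real.cos_le_cos_of_nonneg_of_le_pi (Real.arccos_nonneg _)
        (by linarith [Real.arccos_nonneg δ]) harc
    rw [Real.cos_arccos ht.1 ht.2, Real.cos_pi_sub,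
      Real.cos_arccos (by linarith [hδIoc.1] : (-1:ℝ) ≤ δ) hδIoc.2] at h1
    linarith
  linarith

/-- Remark after Theorem 4.2 of the paper. Fix `n > 1` and let
`d m = δ(m, n)` (the least element of `BorsukSet m n`).  For any real `α < 1/(n-1)`,
`m^α · (1 - δ(m, n)) → 0` as `m → ∞`. -/
theorem stmt19 (n : ℕ) (hn : 1 < n) (α : ℝ) (hα : α < 1 / ((n : ℝ) - 1))
    (d : ℕ → ℝ) (hd : ∀ m, 1 ≤ m → IsLeast (BorsukSet m n) (d m)) :
    Filter.Tendsto (fun m : ℕ => (m : ℝ) ^ α * (1 - d m)) Filter.atTop (nhds 0) := by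
  have hn0 : (0:ℝ) < n := by positivity
  have hnn : (2:ℝ) ≤ n := by exact_mod_cast hn
  have h2n : α < 2 / n := by
    apply lt_of_lt_of_le hα
    rw [div_le_div_iff₀ (by linarith) hn0]
    nlinarith
  have hexp : α - 2 / (n:ℝ) < 0 := by
    have h0 : (0:ℝ) < 2 / n := by positivity
    linarith
  have hlim : Filter.Tendsto (fun m : ℕ => 648 * (n:ℝ)^2 * (m:ℝ) ^ (α - 2/(n:ℝ)))
      Filter.atTop (nhds 0) := by
    have h1 : Filter.Tendsto (fun x : ℝ => x ^ (-(2/(n:ℝ) - α))) Filter.atTop (nhds 0) :=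
      tendsto_rpow_neg_atTop (by linarith)
    have h2 := (h1.comp tendsto_natCast_atTop_atTop).const_mul (648 * (n:ℝ)^2)
    rw [mul_zero] at h2
    have h3 : -(2/(n:ℝ) - α) = α - 2/(n:ℝ) := by ring
    simpa [Function.comp, h3] using h2
  apply squeeze_zero' ?_ ?_ hlim
  · filter_upwards [Filter.eventually_ge_atTop 1] with m hm1
    have hle := (hd m hm1).1.1.2
    have h1 : (0:ℝ) ≤ (m:ℝ) ^ α := Real.rpow_nonneg (Nat.cast_nonneg m) α
    have h2 : (0:ℝ) ≤ 1 - d m := by linarith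
    exact mul_nonneg h1 h2
  · filter_upwards [Filter.eventually_ge_atTop (max 1 ((18*n)^n))] with m hm
    have hm1 : 1 ≤ m := le_trans (le_max_left _ _) hm
    have hmN : (18*n)^n ≤ m := le_trans (le_max_right _ _) hm
    have hmR1 : (1:ℝ) ≤ (m:ℝ) := by exact_mod_cast hm1
    have hmpos : (0:ℝ) < (m:ℝ) := by linarith
    set p : ℝ := (m:ℝ) ^ (1/(n:ℝ)) with hp
    have hppos : 0 < p := Real.rpow_pos_of_pos hmpos _
    have hnne : (n:ℝ) ≠ 0 := by positivity
    have hpow_p : p ^ (n : ℕ) = (m:ℝ) := by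
      rw [hp, ← Real.rpow_natCast ((m:ℝ) ^ (1/(n:ℝ))) n, ← Real.rpow_mul (le_of_lt hmpos),
        one_div_mul_cancel hnne, Real.rpow_one]
    have hpge : 18 * (n:ℝ) ≤ p := by
      have hc : (18 * (n:ℝ)) ^ (n:ℕ) ≤ (m:ℝ) := by
        have := hmN
        push_cast
        exact_mod_cast Nat.cast_le.mpr hmN
      have h1 := Real.rpow_le_rpow (by positivity) hc
        (by positivity : (0:ℝ) ≤ 1/(n:ℝ))
      rwa [← Real.rpow_natCast (18 * (n:ℝ)) n, ← Real.rpow_mul (by positivity),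
        mul_one_div_cancel hnne, Real.rpow_one] at h1
    set r : ℝ := 18 * (n:ℝ) / p with hr
    have hr0 : 0 < r := by positivity
    have hr1 : r ≤ 1 := by
      rw [hr, div_le_one hppos]; exact hpge
    have hdr : 18 * (n:ℝ) / r = p := by
      rw [hr]; field_simp
    have hcount : ((18 * (n:ℝ) / r)) ^ (n:ℕ) ≤ (m:ℝ) := by
      rw [hdr, hpow_p]
    have hkey := key_ineq n hn m hm1 (d m) (hd m hm1).1 r hr0 hr1 hcount
    have hp2 : p ^ (2:ℕ) = (m:ℝ) ^ (2/(n:ℝ)) := by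
      rw [hp, ← Real.rpow_natCast ((m:ℝ) ^ (1/(n:ℝ))) 2, ← Real.rpow_mul (le_of_lt hmpos)]
      norm_num
      rw [show ((n:ℝ))⁻¹ * 2 = 2 / (n:ℝ) by ring]
    have h1 : (0:ℝ) ≤ (m:ℝ) ^ α := Real.rpow_nonneg (Nat.cast_nonneg m) α
    calc (m:ℝ) ^ α * (1 - d m) ≤ (m:ℝ) ^ α * (2 * r^2) :=
          mul_le_mul_of_nonneg_left hkey h1
    _ = 648 * (n:ℝ)^2 * (m:ℝ) ^ (α - 2/(n:ℝ)) := by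
        have hr2 : r^2 = 324 * (n:ℝ)^2 / (m:ℝ) ^ (2/(n:ℝ)) := by
          rw [hr, div_pow, hp2]; ring_nf
        rw [hr2, Real.rpow_sub hmpos]
        have hmne : (m:ℝ) ^ (2/(n:ℝ)) ≠ 0 := by
          have := Real.rpow_pos_of_pos hmpos (2/(n:ℝ)); positivity
        field_simp
        ring
end
end
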